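/- A Banach space X has the coarse p-DP* property if and only if every conditionally weakly compact subset of X is coarse p-limited. -/

import Mathlib

open Filter Topology Metric

noncomputable section

/-- The sequence space `ℓ_p` over `ℝ`. -/
abbrev lpS (p : ENNReal) : Type := lp (fun _ : ℕ => ℝ) p

variable {W X Y Z : Type*}

/-- A set `A ⊆ X` is coarse `p`-limited if every bounded operator `T : X → ℓ_p`
maps `A` to a relatively compact subset of `ℓ_p`. -/
def CoarsePLimited (p : ENNReal) [Fact (1 ≤ p)]
    [NormedAddCommGroup X] [NormedSpace ℝ X] (A : Set X) : Prop :=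
  ∀ T : X →L[ℝ] lpS p, IsCompact (closure (T '' A))

/-- A sequence is weakly null if every continuous functional sends it to a null sequence. -/
def WeaklyNull [NormedAddCommGroup X] [NormedSpace ℝ X] (x : ℕ → X) : Prop :=
  ∀ f : X →L[ℝ] ℝ, Tendsto (fun n => f (x n)) atTop (𝓝 0)

/-- A sequence is weakly Cauchy if every continuous functional sends it to a Cauchy sequence. -/
def WeaklyCauchy [NormedAddCommGroup X] [NormedSpace ℝ X] (x : ℕ → X) : Prop :=
  ∀ f : X →L[ℝ] ℝ, CauchySeq (fun n => f (x n))

/-- A set is conditionally weakly compact if every sequence in it has a weakly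
Cauchy subsequence. -/
def CondWeaklyCompact [NormedAddCommGroup X] [NormedSpace ℝ X] (A : Set X) : Prop :=
  ∀ x : ℕ → X, (∀ n, x n ∈ A) → ∃ φ : ℕ → ℕ, StrictMono φ ∧ WeaklyCauchy (x ∘ φ)

/-- A set is relatively weakly compact if its closure in the weak topology is compact. -/
def RelWeaklyCompact [NormedAddCommGroup X] [NormedSpace ℝ X] (A : Set X) : Prop :=
  IsCompact (closure ((toWeakSpaceCLM ℝ X) '' A))

/-- A Banach space has the coarse `p`-DP* property if every relatively weakly compact
subset is coarse `p`-limited. -/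
def CoarsePDPstar (p : ENNReal) [Fact (1 ≤ p)] (X : Type*)
    [NormedAddCommGroup X] [NormedSpace ℝ X] : Prop :=
  ∀ A : Set X, RelWeaklyCompact A → CoarsePLimited p A

/-- A Banach space has the coarse `p`-Gelfand-Phillips property if every coarse
`p`-limited subset is relatively compact. -/
def CoarsePGP (p : ENNReal) [Fact (1 ≤ p)] (X : Type*)
    [NormedAddCommGroup X] [NormedSpace ℝ X] : Prop :=
  ∀ A : Set X, CoarsePLimited p A → IsCompact (closure A)

/-- A set `A` is limited if every weak*-null sequence of functionals converges to `0`
uniformly on `A`. -/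
def LimitedSet [NormedAddCommGroup X] [NormedSpace ℝ X] (A : Set X) : Prop :=
  ∀ f : ℕ → (X →L[ℝ] ℝ), (∀ x : X, Tendsto (fun n => f n x) atTop (𝓝 0)) →
    TendstoUniformlyOn (fun n x => f n x) 0 atTop A

/-- A set `A` is `p`-limited if for every weak* `p`-summable sequence `(f n)` of
functionals there is `a ∈ ℓ_p` with `|f n x| ≤ a n` for all `x ∈ A` and all `n`. -/
def PLimitedSet (p : ENNReal) [NormedAddCommGroup X] [NormedSpace ℝ X] (A : Set X) : Prop :=
  ∀ f : ℕ → (X →L[ℝ] ℝ), (∀ x : X, Memℓp (fun n => f n x) p) →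
    ∃ a : ℕ → ℝ, Memℓp a p ∧ ∀ x ∈ A, ∀ n, |f n x| ≤ a n

/-- A sequence of vectors has norm-null if its norms tend to zero. -/
def NormNull [NormedAddCommGroup X] (x : ℕ → X) : Prop :=
  Tendsto (fun n => ‖x n‖) atTop (𝓝 0)

/-- The Schur property: weakly null sequences are norm null. -/
def SchurProp (X : Type*) [NormedAddCommGroup X] [NormedSpace ℝ X] : Prop :=
  ∀ x : ℕ → X, WeaklyNull x → NormNull x

/-- A coarse `p`-limited operator: the image of the unit ball is coarse `p`-limited. -/
def CoarsePLimOp (p : ENNReal) [Fact (1 ≤ p)] [NormedAddCommGroup X] [NormedSpace ℝ X]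
    [NormedAddCommGroup Y] [NormedSpace ℝ Y] (T : X →L[ℝ] Y) : Prop :=
  CoarsePLimited p (T '' closedBall (0 : X) 1)

/-- A weakly compact operator: the image of the unit ball is relatively weakly compact. -/
def WeaklyCompactOp [NormedAddCommGroup X] [NormedSpace ℝ X]
    [NormedAddCommGroup Y] [NormedSpace ℝ Y] (T : X →L[ℝ] Y) : Prop :=
  RelWeaklyCompact (T '' closedBall (0 : X) 1)

/-- A compact operator: the image of the unit ball is relatively compact. -/
def CompactOp [NormedAddCommGroup X] [NormedSpace ℝ X]
    [NormedAddCommGroup Y] [NormedSpace ℝ Y] (T : X →L[ℝ] Y) : Prop :=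
  IsCompact (closure (T '' closedBall (0 : X) 1))

/-- `X` contains an isomorphic copy of `ℓ₁`. -/
def ContainsL1 (X : Type*) [NormedAddCommGroup X] [NormedSpace ℝ X] : Prop :=
  ∃ T : lpS 1 →L[ℝ] X, ∃ c : ℝ, 0 < c ∧ ∀ v : lpS 1, c * ‖v‖ ≤ ‖T v‖


section Aux
variable {E : Type*} [NormedAddCommGroup E] [NormedSpace ℝ E]

lemma topDualPairing_flip_injective :
    Function.Injective ⇑(topDualPairing ℝ E).flip := by
  intro x y h
  have h2 : x - y = 0 := by
    apply NormedSpace.eq_zero_of_forall_dual_eq_zero ℝ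
    intro f
    have := congrArg (fun g => g f) h
    simp only [LinearMap.flip_apply] at this
    rw [map_sub, sub_eq_zero]
    exact this
  exact sub_eq_zero.mp h2

instance : T2Space (WeakSpace ℝ E) :=
  (WeakBilin.isEmbedding topDualPairing_flip_injective).t2Space

lemma weak_eval_cont (f : E →L[ℝ] ℝ) :
    Continuous fun x : WeakSpace ℝ E => f ((toWeakSpace ℝ E).symm x) :=
  WeakBilin.eval_continuous (topDualPairing ℝ E).flip f

lemma weak_tendsto_iff {f : ℕ → E} {x : E} :
    Tendsto (fun n => toWeakSpaceCLM ℝ E (f n)) atTop (𝓝 (toWeakSpaceCLM ℝ E x)) ↔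
      ∀ g : E →L[ℝ] ℝ, Tendsto (fun n => g (f n)) atTop (𝓝 (g x)) :=
  WeakBilin.tendsto_iff_forall_eval_tendsto _ topDualPairing_flip_injective

lemma exists_sep {F : Type*} [NormedAddCommGroup F] [CompleteSpace F] {S : Set F}
    (h : ¬ IsCompact (closure S)) :
    ∃ ε > 0, ∃ u : ℕ → F, (∀ n, u n ∈ S) ∧ ∀ m n, m < n → ε ≤ dist (u n) (u m) := by
  have hTB : ¬ TotallyBounded S := fun hTB =>
    h (TotallyBounded.isCompact_of_isClosed (totallyBounded_closure.2 hTB) isClosed_closure)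
  rw [Metric.totallyBounded_iff] at hTB
  push_neg at hTB
  obtain ⟨ε, hε, hcov⟩ := hTB
  have key : ∀ t : Finset F, ∃ x ∈ S, ∀ y ∈ t, ε ≤ dist x y := by
    intro t
    obtain ⟨x, hxS, hx⟩ := Set.not_subset.mp (hcov ↑t t.finite_toSet)
    refine ⟨x, hxS, fun y hy => ?_⟩
    by_contra hlt
    exact hx (Set.mem_biUnion hy (by simpa [Metric.mem_ball] using lt_of_not_ge hlt))
  choose g hgS hgd using key
  haveI : DecidableEq F := Classical.decEq F
  let v : ℕ → Finset F := fun n => Nat.rec ∅ (fun _ t => insert (g t) t) n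
  have hv : ∀ n, v (n+1) = insert (g (v n)) (v n) := fun n => rfl
  have hmem : ∀ m k, m < k → g (v m) ∈ v k := by
    intro m k hk
    induction k with
    | zero => omega
    | succ k ih =>
      rw [hv]
      rcases Nat.lt_succ_iff_lt_or_eq.mp hk with h'|h'
      · exact Finset.mem_insert_of_mem (ih h')
      · subst h'; exact Finset.mem_insert_self _ _
  exact ⟨ε, hε, fun n => g (v n), fun n => hgS _, fun m n hmn => hgd (v n) _ (hmem m n hmn)⟩

lemma no_sep {v : ℕ → E} {ε : ℝ} (hε : 0 < ε) (hsep : ∀ n, ε ≤ ‖v n‖)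
    (hw : ∀ g : E →L[ℝ] ℝ, Tendsto (fun n => g (v n)) atTop (𝓝 0))
    (hc : IsCompact (closure (Set.range v))) : False := by
  obtain ⟨a, _, φ, hφ, hconv⟩ :=
    hc.isSeqCompact (x := v) (fun n => subset_closure (Set.mem_range_self n))
  have ha : a = 0 := by
    apply NormedSpace.eq_zero_of_forall_dual_eq_zero ℝ
    intro f
    have h1 : Tendsto (fun n => f (v (φ n))) atTop (𝓝 (f a)) :=
      (f.continuous.tendsto a).comp hconv
    have h2 : Tendsto (fun n => f (v (φ n))) atTop (𝓝 0) :=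
      (hw f).comp hφ.tendsto_atTop
    exact tendsto_nhds_unique h1 h2
  have hn : Tendsto (fun n => ‖v (φ n)‖) atTop (𝓝 ‖a‖) :=
    (continuous_norm.tendsto a).comp hconv
  rw [ha, norm_zero] at hn
  have := le_of_tendsto_of_tendsto' tendsto_const_nhds hn (fun n => hsep (φ n))
  linarith

end Aux

section Main
variable {X : Type*}

lemma relWC_of_weaklyNull [NormedAddCommGroup X] [NormedSpace ℝ X]
    {w : ℕ → X} (hw : WeaklyNull w) : RelWeaklyCompact (Set.range w) := by
  have h0 : Tendsto (fun n => toWeakSpaceCLM ℝ X (w n)) atTop (𝓝 (toWeakSpaceCLM ℝ X 0)) :=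
    weak_tendsto_iff.2 (fun g => by simpa using hw g)
  have hK : IsCompact (insert (toWeakSpaceCLM ℝ X 0)
      (Set.range fun n => toWeakSpaceCLM ℝ X (w n))) := h0.isCompact_insert_range
  have hsub : closure ((toWeakSpaceCLM ℝ X) '' Set.range w) ⊆
      insert (toWeakSpaceCLM ℝ X 0) (Set.range fun n => toWeakSpaceCLM ℝ X (w n)) := by
    rw [← Set.range_comp]
    exact closure_minimal (Set.subset_insert _ _) hK.isClosed
  exact hK.of_isClosed_subset isClosed_closure hsub

lemma rwc_cwc [NormedAddCommGroup X] [NormedSpace ℝ X] {A : Set X}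
    (hA : RelWeaklyCompact A) : CondWeaklyCompact A := by
  classical
  intro x hx
  set J := toWeakSpaceCLM ℝ X with hJ
  set Y := (Submodule.span ℝ (Set.range x)).topologicalClosure with hY
  have hYsep : TopologicalSpace.IsSeparable (Y : Set X) := by
    rw [hY, Submodule.topologicalClosure_coe]
    exact ((Set.countable_range x).isSeparable.span).closure
  obtain ⟨c, hccount, hcsub⟩ := hYsep
  haveI := hccount.to_subtype
  have hfex : ∀ d : c, ∃ g : X →L[ℝ] ℝ, ‖g‖ ≤ 1 ∧ g d = ‖(d : X)‖ := fun d =>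
    exists_dual_vector'' ℝ (d : X)
  choose f hf1 hf2 using hfex
  let Φ : WeakSpace ℝ X → (c → ℝ) := fun z d => f d ((toWeakSpace ℝ X).symm z)
  have hΦc : Continuous Φ := continuous_pi fun d => weak_eval_cont (f d)
  have hK : IsCompact (closure (J '' Set.range x)) := by
    refine hA.of_isClosed_subset isClosed_closure (closure_mono (Set.image_mono ?_))
    rintro - ⟨n, rfl⟩; exact hx n
  set K := closure (J '' Set.range x) with hKdef
  have hrangeY : Set.range x ⊆ (Y : Set X) := fun z hz =>
    (Submodule.span ℝ (Set.range x)).le_topologicalClosure (Submodule.subset_span hz)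
  have hJY : closure (J '' (Y : Set X)) = J '' (Y : Set X) := by
    have h1 := (Y.convex).toWeakSpace_closure (𝕜 := ℝ)
    have h2 : (toWeakSpace ℝ X) '' (Y : Set X) = J '' (Y : Set X) :=
      Set.image_congr fun a _ => rfl
    have h3 : closure (Y : Set X) = (Y : Set X) := by
      rw [hY]
      exact (Submodule.isClosed_topologicalClosure _).closure_eq
    rw [← h2, ← h1, h3]
  have hKY : K ⊆ J '' (Y : Set X) := by
    rw [hKdef, ← hJY]
    exact closure_mono (Set.image_mono hrangeY)
  have hsepY : ∀ w : X, w ∈ (Y : Set X) → (∀ d : c, f d w = 0) → w = 0 := by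
    intro w hw h0
    have hwc : w ∈ closure c := hcsub hw
    have hkey : ∀ δ : ℝ, 0 < δ → ‖w‖ ≤ 2 * δ := by
      intro δ hδ
      obtain ⟨d, hdc, hdist⟩ := Metric.mem_closure_iff.mp hwc δ hδ
      have hwd : ‖w - d‖ < δ := by rwa [dist_eq_norm] at hdist
      have hnd : ‖d‖ ≤ δ := by
        have e1 : f ⟨d, hdc⟩ d = ‖d‖ := hf2 ⟨d, hdc⟩
        have e2 : f ⟨d, hdc⟩ w = 0 := h0 ⟨d, hdc⟩
        have : ‖d‖ = f ⟨d, hdc⟩ (d - w) := by rw [map_sub, e1, e2, sub_zero]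
        calc ‖d‖ = f ⟨d, hdc⟩ (d - w) := this
          _ ≤ |f ⟨d, hdc⟩ (d - w)| := le_abs_self _
          _ ≤ ‖f ⟨d, hdc⟩‖ * ‖d - w‖ := (f ⟨d, hdc⟩).le_opNorm _
          _ ≤ 1 * ‖d - w‖ := by
              apply mul_le_mul_of_nonneg_right (hf1 _) (norm_nonneg _)
          _ = ‖w - d‖ := by rw [one_mul, norm_sub_rev]
          _ ≤ δ := hwd.le
      calc ‖w‖ = ‖(w - d) + d‖ := by rw [sub_add_cancel]
        _ ≤ ‖w - d‖ + ‖d‖ := norm_add_le _ _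
        _ ≤ δ + δ := add_le_add hwd.le hnd
        _ = 2 * δ := by ring
    by_contra hw0
    have hpos : 0 < ‖w‖ := norm_pos_iff.mpr hw0
    have := hkey (‖w‖ / 4) (by linarith)
    linarith
  have hΦJ : ∀ (y : X) (d : c), Φ (J y) d = f d y := fun y d => rfl
  have hΦinj : Set.InjOn Φ K := by
    intro z hz z' hz' hΦ
    obtain ⟨y, hyY, rfl⟩ := hKY hz
    obtain ⟨y', hy'Y, rfl⟩ := hKY hz'
    have hdiff : y - y' = 0 := by
      refine hsepY _ (Y.sub_mem hyY hy'Y) (fun d => ?_)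
      have := congrFun hΦ d
      rw [hΦJ, hΦJ] at this
      rw [map_sub, this, sub_self]
    rw [sub_eq_zero] at hdiff
    rw [hdiff]
  haveI : CompactSpace K := isCompact_iff_compactSpace.mp hK
  let Φk : K → (c → ℝ) := fun z => Φ z
  have hΦkc : Continuous Φk := hΦc.comp continuous_subtype_val
  have hΦkinj : Function.Injective Φk := fun a b hab =>
    Subtype.ext (hΦinj a.2 b.2 hab)
  have hemb := hΦkc.isClosedEmbedding hΦkinj
  let s : ℕ → K := fun n => ⟨J (x n), subset_closure ⟨x n, Set.mem_range_self n, rfl⟩⟩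
  have hcomp2 : IsCompact (Φ '' K) := hK.image hΦc
  obtain ⟨a, haK, ψ, hψ, hconv⟩ :=
    hcomp2.isSeqCompact (x := fun n => Φk (s n))
      (fun n => ⟨(s n : WeakSpace ℝ X), (s n).2, rfl⟩)
  obtain ⟨z, hzK, rfl⟩ := haK
  have hconv' : Tendsto (fun n => s (ψ n)) atTop (𝓝 ⟨z, hzK⟩) := by
    rw [hemb.toIsInducing.tendsto_nhds_iff]
    exact hconv
  refine ⟨ψ, hψ, fun g => ?_⟩
  have hgc : Tendsto (fun n => g ((toWeakSpace ℝ X).symm ((s (ψ n) : WeakSpace ℝ X))))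
      atTop (𝓝 (g ((toWeakSpace ℝ X).symm z))) :=
    (((weak_eval_cont g).comp continuous_subtype_val).tendsto ⟨z, hzK⟩).comp hconv'
  exact hgc.cauchySeq

lemma cwc_forward (p : ENNReal) [Fact (1 ≤ p)] [NormedAddCommGroup X] [NormedSpace ℝ X]
    (h : CoarsePDPstar p X) {A : Set X} (hA : CondWeaklyCompact A) : CoarsePLimited p A := by
  intro T
  by_contra hc
  obtain ⟨ε, hε, u, huS, husep⟩ := exists_sep hc
  choose xs hxsA hxsT using huS
  obtain ⟨φ, hφ, hwc⟩ := hA xs hxsA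
  set w : ℕ → X := fun k => xs (φ (k + 1)) - xs (φ k) with hw
  have hwn : WeaklyNull w := by
    intro g
    have hcs : CauchySeq fun n => g (xs (φ n)) := hwc g
    obtain ⟨L, hL⟩ := cauchySeq_tendsto_of_complete hcs
    have h1 : Tendsto (fun k => g (xs (φ (k + 1)))) atTop (𝓝 L) :=
      hL.comp (tendsto_add_atTop_nat 1)
    have := h1.sub hL
    simpa [hw, map_sub] using this
  have hrel : RelWeaklyCompact (Set.range w) := relWC_of_weaklyNull hwn
  have hcomp : IsCompact (closure (T '' Set.range w)) := h _ hrel T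
  have hcomp' : IsCompact (closure (Set.range fun k => T (w k))) := by
    rwa [← Set.range_comp] at hcomp
  refine no_sep hε (fun k => ?_) (fun g => ?_) hcomp'
  · have : T (w k) = u (φ (k + 1)) - u (φ k) := by
      rw [hw]; simp only [map_sub, hxsT]
    rw [this, ← dist_eq_norm]
    exact husep _ _ (hφ (Nat.lt_succ_self k))
  · have := hwn (g.comp T)
    simpa using this

end Main

theorem stmt13 (p : ENNReal) [Fact (1 ≤ p)] (hp : p ≠ ⊤)
    [NormedAddCommGroup X] [NormedSpace ℝ X] [CompleteSpace X] :
    CoarsePDPstar p X ↔ ∀ A : Set X, CondWeaklyCompact A → CoarsePLimited p A := by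
  constructor
  · intro h A hA
    exact cwc_forward p h hA
  · intro h A hA
    exact h A (rwc_cwc hA)
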